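/- Let n ≥ 1, θ ∈ ℝⁿ, and let G₁, …, G_n be independent standard Gumbel random variables. Then almost surely, the limit lim_{τ → 0⁺} softmax_τ(θ + G) exists and equals the one-hot vector e_J, where J is the (almost surely unique) index maximizing i ↦ θ_i + G_i. (This is the almost sure coupling D = lim_{τ→0} S_τ of equation (3) of the paper, relating the discrete sample D to the Gumbel-Softmax relaxation S_τ = softmax_τ(θ + G).) -/

import Mathlib

open MeasureTheory Filter Set

/-- The tempered softmax `softmax_τ(x)_i = exp (x_i/τ) / Σ_k exp (x_k/τ)`. -/
noncomputable def temperedSoftmax {n : ℕ} (τ : ℝ) (x : Fin n → ℝ) : Fin n → ℝ :=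
  fun i => Real.exp (x i / τ) / ∑ k, Real.exp (x k / τ)

lemma softmax_tendsto {n : ℕ} (x : Fin n → ℝ) (J : Fin n)
    (hJ : ∀ i, i ≠ J → x i < x J) :
    Tendsto (fun τ => temperedSoftmax τ x) (nhdsWithin 0 (Set.Ioi 0)) (nhds (Pi.single J 1)) := by
  rw [tendsto_pi_nhds]
  intro i
  have hrw : ∀ τ : ℝ, temperedSoftmax τ x i =
      Real.exp ((x i - x J) / τ) / ∑ k, Real.exp ((x k - x J) / τ) := by
    intro τ
    simp only [temperedSoftmax, sub_div, Real.exp_sub]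
    rw [← Finset.sum_div, div_div_div_cancel_right₀ (Real.exp_ne_zero _)]
  simp only [hrw]
  have hterm : ∀ k : Fin n, Tendsto (fun τ : ℝ => Real.exp ((x k - x J) / τ))
      (nhdsWithin 0 (Set.Ioi 0)) (nhds (if k = J then 1 else 0)) := by
    intro k
    by_cases hk : k = J
    · subst hk
      simp only [if_pos rfl, sub_self, zero_div, Real.exp_zero]
      exact tendsto_const_nhds
    · simp only [if_neg hk]
      have hneg : x k - x J < 0 := sub_neg.2 (hJ k hk)
      have h1 : Tendsto (fun τ : ℝ => (x k - x J) / τ) (nhdsWithin 0 (Set.Ioi 0)) atBot := by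
        have := tendsto_inv_nhdsGT_zero.atTop_mul_const_of_neg hneg
        simpa [div_eq_mul_inv, mul_comm] using this
      exact Real.tendsto_exp_atBot.comp h1
  have hden : Tendsto (fun τ : ℝ => ∑ k, Real.exp ((x k - x J) / τ))
      (nhdsWithin 0 (Set.Ioi 0)) (nhds 1) := by
    have h := tendsto_finset_sum Finset.univ (fun k _ => hterm k)
    simpa using h
  have := (hterm i).div hden one_ne_zero
  simpa [Pi.single_apply, div_one, Pi.div_def] using this

lemma map_singleton_zero {Ω : Type*} {ℱ : MeasurableSpace Ω} (μ : Measure Ω)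
    [IsProbabilityMeasure μ] (g : Ω → ℝ) (hg : Measurable g)
    (hcdf : ∀ x : ℝ, (μ {ω | g ω ≤ x}).toReal = Real.exp (-Real.exp (-x))) (a : ℝ) :
    μ.map g {a} = 0 := by
  set ν := μ.map g with hν
  have : IsProbabilityMeasure ν := Measure.isProbabilityMeasure_map hg.aemeasurable
  have hIic : ∀ x : ℝ, (ν (Iic x)).toReal = Real.exp (-Real.exp (-x)) := by
    intro x
    rw [hν, Measure.map_apply hg measurableSet_Iic]
    exact hcdf x
  set F : ℝ → ℝ := fun x => Real.exp (-Real.exp (-x)) with hF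
  have hFc : Continuous F := by fun_prop
  have key : ∀ ε : ℝ, 0 < ε → (ν {a}).toReal ≤ F a - F (a - ε) := by
    intro ε hε
    have hsub : {a} ⊆ Iic a \ Iic (a - ε) := by
      rw [singleton_subset_iff]
      exact ⟨mem_Iic.2 le_rfl, by simp only [mem_Iic, not_le]; linarith⟩
    have h1 : ν {a} ≤ ν (Iic a \ Iic (a - ε)) := measure_mono hsub
    have h2 : ν (Iic a \ Iic (a - ε)) = ν (Iic a) - ν (Iic (a - ε)) :=
      measure_diff (Iic_subset_Iic.2 (by linarith)) measurableSet_Iic.nullMeasurableSet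
        (measure_ne_top ν _)
    have h3 : (ν (Iic a) - ν (Iic (a - ε))).toReal
        = (ν (Iic a)).toReal - (ν (Iic (a - ε))).toReal :=
      ENNReal.toReal_sub_of_le (measure_mono (Iic_subset_Iic.2 (by linarith)))
        (measure_ne_top ν _)
    calc (ν {a}).toReal ≤ (ν (Iic a \ Iic (a - ε))).toReal :=
          ENNReal.toReal_mono (measure_ne_top ν _) h1
      _ = (ν (Iic a)).toReal - (ν (Iic (a - ε))).toReal := by rw [h2, h3]
      _ = F a - F (a - ε) := by rw [hIic, hIic]
  have hlim : Tendsto (fun ε : ℝ => F a - F (a - ε)) (nhdsWithin 0 (Set.Ioi 0)) (nhds 0) := by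
    have : Tendsto (fun ε : ℝ => F a - F (a - ε)) (nhds 0) (nhds (F a - F (a - 0))) := by
      exact (tendsto_const_nhds.sub ((hFc.comp (continuous_const.sub continuous_id)).tendsto 0))
    have h0 : F a - F (a - 0) = 0 := by simp
    rw [h0] at this
    exact this.mono_left nhdsWithin_le_nhds
  have hle : (ν {a}).toReal ≤ 0 := by
    refine ge_of_tendsto hlim ?_
    filter_upwards [self_mem_nhdsWithin] with ε hε
    exact key ε hε
  have : (ν {a}).toReal = 0 := le_antisymm hle ENNReal.toReal_nonneg
  exact (ENNReal.toReal_eq_zero_iff _).1 this |>.resolve_right (measure_ne_top ν _)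

/-- **The almost sure coupling `D = lim_{τ→0} S_τ`** (equation (3) of the paper). If
`G₁, …, G_n` are independent standard Gumbel random variables, then almost surely there is an
index `J` that strictly maximizes `i ↦ θ_i + G_i` (hence is the unique maximizer), and
`softmax_τ(θ + G) → e_J` as `τ → 0⁺`. -/
theorem gumbel_softmax_coupling {Ω : Type*} {ℱ : MeasurableSpace Ω} (μ : Measure Ω)
    [IsProbabilityMeasure μ] (n : ℕ) (hn : 1 ≤ n) (θ : Fin n → ℝ)
    (G : Fin n → Ω → ℝ) (hGmeas : ∀ i, Measurable (G i))
    (hGindep : ProbabilityTheory.iIndepFun G μ)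
    (hGcdf : ∀ i, ∀ x : ℝ,
      (μ {ω | G i ω ≤ x}).toReal = Real.exp (-Real.exp (-x))) :
    ∀ᵐ ω ∂μ, ∃ J : Fin n,
      (∀ i, i ≠ J → θ i + G i ω < θ J + G J ω) ∧
      Filter.Tendsto (fun τ => temperedSoftmax τ (fun i => θ i + G i ω))
        (nhdsWithin 0 (Set.Ioi 0)) (nhds (Pi.single J 1)) := by
  -- Step 1 : a.s. the values θ i + G i are pairwise distinct
  have hpair : ∀ i j : Fin n, i ≠ j →
      μ {ω | θ i + G i ω = θ j + G j ω} = 0 := by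
    intro i j hij
    have hindep : ProbabilityTheory.IndepFun (G i) (G j) μ :=
      hGindep.indepFun hij
    have hmap : μ.map (fun ω => (G i ω, G j ω))
        = (μ.map (G i)).prod (μ.map (G j)) :=
      (ProbabilityTheory.indepFun_iff_map_prod_eq_prod_map_map
        (hGmeas i).aemeasurable (hGmeas j).aemeasurable).1 hindep
    set c : ℝ := θ j - θ i with hc
    have hS : MeasurableSet {p : ℝ × ℝ | p.1 = p.2 + c} :=
      (isClosed_eq continuous_fst (continuous_snd.add continuous_const)).measurableSet
    have hset : {ω | θ i + G i ω = θ j + G j ω}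
        = (fun ω => (G i ω, G j ω)) ⁻¹' {p : ℝ × ℝ | p.1 = p.2 + c} := by
      ext ω
      simp only [mem_setOf_eq, mem_preimage, hc]
      constructor <;> intro h <;> linarith
    rw [hset, ← Measure.map_apply ((hGmeas i).prodMk (hGmeas j)) hS, hmap]
    have : IsProbabilityMeasure (μ.map (G j)) :=
      Measure.isProbabilityMeasure_map (hGmeas j).aemeasurable
    rw [Measure.prod_apply hS]
    have hzero : ∀ x : ℝ, (μ.map (G j)) (Prod.mk x ⁻¹' {p : ℝ × ℝ | p.1 = p.2 + c}) = 0 := by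
      intro x
      have : (Prod.mk x ⁻¹' {p : ℝ × ℝ | p.1 = p.2 + c}) = {x - c} := by
        ext y
        simp only [mem_preimage, mem_setOf_eq, mem_singleton_iff]
        constructor <;> intro h <;> linarith
      rw [this]
      exact map_singleton_zero μ (G j) (hGmeas j) (hGcdf j) (x - c)
    simp only [hzero]
    simp
  have hae : ∀ᵐ ω ∂μ, ∀ i j : Fin n, i ≠ j → θ i + G i ω ≠ θ j + G j ω := by
    rw [MeasureTheory.ae_all_iff]
    intro i
    rw [MeasureTheory.ae_all_iff]
    intro j
    by_cases hij : i = j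
    · filter_upwards with ω h; exact absurd hij h
    · have : μ {ω | ¬ (i ≠ j → θ i + G i ω ≠ θ j + G j ω)} = 0 := by
        have hsub : {ω | ¬ (i ≠ j → θ i + G i ω ≠ θ j + G j ω)}
            ⊆ {ω | θ i + G i ω = θ j + G j ω} := by
          intro ω hω
          simp only [mem_setOf_eq, _root_.not_imp, not_not] at hω
          exact hω.2
        exact measure_mono_null hsub (hpair i j hij)
      exact this
  filter_upwards [hae] with ω hω
  -- Step 2 : existence of a strict maximizer
  have hne : (Finset.univ : Finset (Fin n)).Nonempty := by
    have : Nonempty (Fin n) := Fin.pos_iff_nonempty.1 hn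
    exact Finset.univ_nonempty
  obtain ⟨J, -, hJmax⟩ := Finset.exists_max_image Finset.univ
    (fun i => θ i + G i ω) hne
  have hstrict : ∀ i, i ≠ J → θ i + G i ω < θ J + G J ω := by
    intro i hi
    exact lt_of_le_of_ne (hJmax i (Finset.mem_univ i)) (hω i J hi)
  exact ⟨J, hstrict, softmax_tendsto _ J hstrict⟩
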